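/- Let A ≥ 0, K > 0, and let f : [0,∞) → ℝ be measurable with |f(t)| ≤ K e^{A t} for all t ≥ 0. If n − β > A, then for every x ≥ 0, | M_n^{(α,β)}[f](x) | ≤ K · ((n − β)/(n − β − A))^{α+1} · exp( n x A / (n − β − A) ). -/

import Mathlib

open MeasureTheory Real Filter

/-- The Szász–Mirakyan basis functions `ψ_{n,k}(x) = e^{-nx} (nx)^k / k!`. -/
noncomputable def psi (n k : ℕ) (x : ℝ) : ℝ :=
  Real.exp (-(n * x)) * (n * x) ^ k / (Nat.factorial k)

/-- The Szász–Mirakyan–Laguerre–Durrmeyer operator `M_n^{(α,β)}`. -/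
noncomputable def M (α β : ℝ) (n : ℕ) (f : ℝ → ℝ) (x : ℝ) : ℝ :=
  ∑' k : ℕ, (((n : ℝ) - β) ^ ((k : ℝ) + α + 1) / Real.Gamma ((k : ℝ) + α + 1)) *
    (∫ t in Set.Ioi (0 : ℝ), f t * t ^ ((k : ℝ) + α) * Real.exp (-((n : ℝ) - β) * t)) *
    psi n k x

/-- The `r`-th moment `μ_r^{(α,β)}(x) = M_n^{(α,β)}[t ↦ t^r](x)`. -/
noncomputable def mu (α β : ℝ) (n : ℕ) (r : ℕ) (x : ℝ) : ℝ :=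
  M α β n (fun t => t ^ r) x

/-- Growth bound: if `|f(t)| ≤ K e^{At}` and `n − β > A`, then
`|M_n^{(α,β)}f(x)| ≤ K ((n−β)/(n−β−A))^{α+1} exp(nxA/(n−β−A))`. -/
theorem stmt_15 (α β : ℝ) (hα : -1 < α) (n : ℕ) (hn : β < n)
    (A K : ℝ) (hA : 0 ≤ A) (hK : 0 < K) (f : ℝ → ℝ) (hf : Measurable f)
    (hbound : ∀ t : ℝ, 0 ≤ t → |f t| ≤ K * Real.exp (A * t)) (hnA : A < (n : ℝ) - β)
    (x : ℝ) (hx : 0 ≤ x) :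
    |M α β n f x| ≤
      K * (((n : ℝ) - β) / ((n : ℝ) - β - A)) ^ (α + 1) *
        Real.exp ((n : ℝ) * x * A / ((n : ℝ) - β - A)) := by
  set c : ℝ := (n : ℝ) - β with hc_def
  set d : ℝ := c - A with hd_def
  have hc : 0 < c := by simp only [hc_def]; linarith
  have hd : 0 < d := by simp only [hd_def, hc_def]; linarith
  set ρ : ℝ := c / d with hρ_def
  have hρ : 0 < ρ := div_pos hc hd
  clear_value c d ρ
  have hpsi_nonneg : ∀ k, 0 ≤ psi n k x := by
    intro k
    unfold psi
    positivity
  -- the bounding sequence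
  set g : ℕ → ℝ := fun k => K * ρ ^ (α + 1) * ρ ^ k * psi n k x with hg_def
  have hterm : ∀ k : ℕ,
      |(c ^ ((k : ℝ) + α + 1) / Real.Gamma ((k : ℝ) + α + 1)) *
        (∫ t in Set.Ioi (0 : ℝ), f t * t ^ ((k : ℝ) + α) * Real.exp (-c * t)) *
        psi n k x| ≤ g k := by
    intro k
    have hk1 : (0 : ℝ) < (k : ℝ) + α + 1 := by
      have : (0 : ℝ) ≤ (k : ℝ) := Nat.cast_nonneg k
      linarith
    have hΓ : 0 < Real.Gamma ((k : ℝ) + α + 1) := Real.Gamma_pos_of_pos hk1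
    have hintd : IntegrableOn (fun t : ℝ => K * (t ^ ((k : ℝ) + α) * Real.exp (-d * t)))
        (Set.Ioi 0) := by
      apply Integrable.const_mul
      have h1 : IntegrableOn (fun t : ℝ => t ^ ((k : ℝ) + α) * Real.exp (-d * t ^ (1 : ℝ)))
          (Set.Ioi 0) :=
        integrableOn_rpow_mul_exp_neg_mul_rpow (by linarith) one_pos hd
      refine h1.congr_fun (fun t ht => ?_) measurableSet_Ioi
      simp only [Real.rpow_one]
    -- bound the integral
    have hint_le : |∫ t in Set.Ioi (0 : ℝ), f t * t ^ ((k : ℝ) + α) * Real.exp (-c * t)|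
        ≤ ∫ t in Set.Ioi (0 : ℝ), K * (t ^ ((k : ℝ) + α) * Real.exp (-d * t)) := by
      rw [← Real.norm_eq_abs]
      refine le_trans (norm_integral_le_integral_norm _) ?_
      refine integral_mono_of_nonneg ?_ hintd ?_
      · exact Filter.Eventually.of_forall fun t => norm_nonneg _
      · rw [Filter.EventuallyLE, ae_restrict_iff' measurableSet_Ioi]
        refine Filter.Eventually.of_forall fun t ht => ?_
        have ht0 : 0 < t := ht
        have h1 : ‖f t * t ^ ((k : ℝ) + α) * Real.exp (-c * t)‖
            = |f t| * (t ^ ((k : ℝ) + α) * Real.exp (-c * t)) := by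
          rw [Real.norm_eq_abs, abs_mul, abs_mul, abs_of_nonneg (Real.rpow_nonneg ht0.le _),
            abs_of_nonneg (Real.exp_pos _).le, mul_assoc]
        rw [h1]
        have h2 : |f t| * (t ^ ((k : ℝ) + α) * Real.exp (-c * t))
            ≤ (K * Real.exp (A * t)) * (t ^ ((k : ℝ) + α) * Real.exp (-c * t)) := by
          apply mul_le_mul_of_nonneg_right (hbound t ht0.le)
          positivity
        refine h2.trans_eq ?_
        rw [hd_def, show -(c - A) * t = A * t + -c * t by ring, Real.exp_add]
        ring
    have hval : ∫ t in Set.Ioi (0 : ℝ), K * (t ^ ((k : ℝ) + α) * Real.exp (-d * t))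
        = K * ((1 / d) ^ ((k : ℝ) + α + 1) * Real.Gamma ((k : ℝ) + α + 1)) := by
      rw [MeasureTheory.integral_const_mul]
      congr 1
      have := Real.integral_rpow_mul_exp_neg_mul_Ioi hk1 hd
      rw [← this]
      refine setIntegral_congr_fun measurableSet_Ioi fun t ht => ?_
      have : (k : ℝ) + α + 1 - 1 = (k : ℝ) + α := by ring
      rw [this, neg_mul]
    -- combine
    rw [abs_mul, abs_mul, abs_of_nonneg (hpsi_nonneg k),
      abs_of_nonneg (by positivity : (0:ℝ) ≤ c ^ ((k : ℝ) + α + 1) / Real.Gamma ((k : ℝ) + α + 1))]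
    have h3 : c ^ ((k : ℝ) + α + 1) / Real.Gamma ((k : ℝ) + α + 1) *
        |∫ t in Set.Ioi (0 : ℝ), f t * t ^ ((k : ℝ) + α) * Real.exp (-c * t)|
        ≤ c ^ ((k : ℝ) + α + 1) / Real.Gamma ((k : ℝ) + α + 1) *
          (K * ((1 / d) ^ ((k : ℝ) + α + 1) * Real.Gamma ((k : ℝ) + α + 1))) := by
      apply mul_le_mul_of_nonneg_left (hint_le.trans_eq hval) (by positivity)
    refine (mul_le_mul_of_nonneg_right h3 (hpsi_nonneg k)).trans_eq ?_
    have h4 : c ^ ((k : ℝ) + α + 1) / Real.Gamma ((k : ℝ) + α + 1) *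
        (K * ((1 / d) ^ ((k : ℝ) + α + 1) * Real.Gamma ((k : ℝ) + α + 1)))
        = K * ρ ^ ((k : ℝ) + α + 1) := by
      have hρ_eq : ρ ^ ((k : ℝ) + α + 1) = c ^ ((k : ℝ) + α + 1) * (1 / d) ^ ((k : ℝ) + α + 1) := by
        rw [← Real.mul_rpow hc.le (by positivity), mul_one_div, ← hρ_def]
      rw [hρ_eq]
      field_simp
    rw [h4]
    have h5 : ρ ^ ((k : ℝ) + α + 1) = ρ ^ (α + 1) * ρ ^ k := by
      rw [show (k : ℝ) + α + 1 = (α + 1) + (k : ℕ) by push_cast; ring,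
        Real.rpow_add hρ, Real.rpow_natCast]
    rw [hg_def]
    simp only []
    rw [h5]
    ring
  -- summability of the bounding sequence
  have hg_eq : ∀ k, g k = (K * ρ ^ (α + 1) * Real.exp (-((n : ℝ) * x))) *
      ((ρ * ((n : ℝ) * x)) ^ k / (Nat.factorial k)) := by
    intro k
    rw [hg_def]
    simp only [psi]
    rw [mul_pow]
    ring
  have hg_summable : Summable g := by
    have := (Real.summable_pow_div_factorial (ρ * ((n : ℝ) * x))).mul_left
      (K * ρ ^ (α + 1) * Real.exp (-((n : ℝ) * x)))
    exact this.congr fun k => (hg_eq k).symm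
  have habs_summable : Summable (fun k : ℕ =>
      |(c ^ ((k : ℝ) + α + 1) / Real.Gamma ((k : ℝ) + α + 1)) *
        (∫ t in Set.Ioi (0 : ℝ), f t * t ^ ((k : ℝ) + α) * Real.exp (-c * t)) *
        psi n k x|) := by
    exact Summable.of_nonneg_of_le (fun k => abs_nonneg _) hterm hg_summable
  have hsummable : Summable (fun k : ℕ =>
      (c ^ ((k : ℝ) + α + 1) / Real.Gamma ((k : ℝ) + α + 1)) *
        (∫ t in Set.Ioi (0 : ℝ), f t * t ^ ((k : ℝ) + α) * Real.exp (-c * t)) *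
        psi n k x) := habs_summable.of_abs
  -- compute tsum of g
  have htsum_g : ∑' k, g k = K * ρ ^ (α + 1) * Real.exp ((n : ℝ) * x * A / d) := by
    have h1 : ∑' k, g k = (K * ρ ^ (α + 1) * Real.exp (-((n : ℝ) * x))) *
        ∑' k : ℕ, ((ρ * ((n : ℝ) * x)) ^ k / (Nat.factorial k)) := by
      rw [← tsum_mul_left]
      exact tsum_congr hg_eq
    rw [h1]
    have h2 : ∑' k : ℕ, ((ρ * ((n : ℝ) * x)) ^ k / (Nat.factorial k))
        = Real.exp (ρ * ((n : ℝ) * x)) := by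
      rw [Real.exp_eq_exp_ℝ]
      exact (NormedSpace.expSeries_div_hasSum_exp (ρ * ((n : ℝ) * x))).tsum_eq
    rw [h2, mul_assoc, ← Real.exp_add]
    congr 1
    rw [hρ_def, show A = c - d by rw [hd_def]; ring]
    field_simp
    ring
  -- conclude
  unfold M
  rw [show (n : ℝ) - β = c from hc_def.symm]
  calc |∑' k : ℕ, (c ^ ((k : ℝ) + α + 1) / Real.Gamma ((k : ℝ) + α + 1)) *
        (∫ t in Set.Ioi (0 : ℝ), f t * t ^ ((k : ℝ) + α) * Real.exp (-c * t)) * psi n k x|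
      ≤ ∑' k : ℕ, |(c ^ ((k : ℝ) + α + 1) / Real.Gamma ((k : ℝ) + α + 1)) *
        (∫ t in Set.Ioi (0 : ℝ), f t * t ^ ((k : ℝ) + α) * Real.exp (-c * t)) * psi n k x| := by
        have h := norm_tsum_le_tsum_norm (f := fun k : ℕ =>
          (c ^ ((k : ℝ) + α + 1) / Real.Gamma ((k : ℝ) + α + 1)) *
          (∫ t in Set.Ioi (0 : ℝ), f t * t ^ ((k : ℝ) + α) * Real.exp (-c * t)) * psi n k x)
          (habs_summable.congr (fun k => (Real.norm_eq_abs _).symm))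
        simpa only [Real.norm_eq_abs] using h
    _ ≤ ∑' k, g k := Summable.tsum_le_tsum hterm habs_summable hg_summable
    _ = K * ρ ^ (α + 1) * Real.exp ((n : ℝ) * x * A / d) := htsum_g
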